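/- arXiv:1805.09688 — 2 statements merged into one kernel-verified Lean document; each statement's English description precedes it below -/
import Mathlib

section
/- If max(r1 - m1, r2 - m2) > 0, then W(θ1, 0, 0) > 0 or W(θ2, 0, 0) > 0; in fact sup over z of W(z, 0, 0) > 0. Consequently, by continuity and the limit W(z,0,0) → -∞ as |z| → ∞, the set {z : W(z, 0, 0) ≥ 0} is a nonempty compact set. -/
theorem viability_positive_fitness
    (r1 r2 g1 g2 m1 m2 θ : ℝ)
    (hg1 : 0 < g1) (hg2 : 0 < g2) (hm1 : 0 < m1) (hm2 : 0 < m2)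
    (hviab : 0 < max (r1 - m1) (r2 - m2))
    (a1 a2 : ℝ → ℝ)
    (ha1 : ∀ z, a1 z = (r1 - g1 * (z - (-θ))^2) - m1)
    (ha2 : ∀ z, a2 z = (r2 - g2 * (z - θ)^2) - m2)
    (W : ℝ → ℝ)
    (hW : ∀ z, W z = (1/2) * (a1 z + a2 z)
        + (1/2) * Real.sqrt ((a1 z - a2 z)^2 + 4 * m1 * m2)) :
    (0 < W (-θ) ∨ 0 < W θ) ∧ (∃ z, 0 < W z) ∧
    ({z : ℝ | 0 ≤ W z}.Nonempty ∧ IsCompact {z : ℝ | 0 ≤ W z}) := by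
  -- sqrt term lower bound : W z ≥ max (a1 z) (a2 z)
  have hWge : ∀ z, max (a1 z) (a2 z) ≤ W z := by
    intro z
    have h1 : |a1 z - a2 z| ≤ Real.sqrt ((a1 z - a2 z)^2 + 4 * m1 * m2) := by
      rw [← Real.sqrt_sq_eq_abs]
      apply Real.sqrt_le_sqrt; nlinarith
    rw [hW z]
    rcases abs_cases (a1 z - a2 z) with ⟨he, _⟩ | ⟨he, _⟩ <;> rw [he] at h1
    · have : a2 z ≤ a1 z := by linarith
      rw [max_eq_left this]; linarith
    · have : a1 z ≤ a2 z := by linarith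
      rw [max_eq_right this]; linarith
  have hkey : 0 < W (-θ) ∨ 0 < W θ := by
    rcases max_cases (r1 - m1) (r2 - m2) with ⟨he, _⟩ | ⟨he, _⟩
    · left
      have := hWge (-θ)
      have h1 : a1 (-θ) = r1 - m1 := by rw [ha1]; ring
      rw [he] at hviab
      calc (0:ℝ) < r1 - m1 := hviab
        _ = a1 (-θ) := h1.symm
        _ ≤ max (a1 (-θ)) (a2 (-θ)) := le_max_left _ _
        _ ≤ W (-θ) := this
    · right
      have := hWge θ
      have h2 : a2 θ = r2 - m2 := by rw [ha2]; ring
      rw [he] at hviab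
      calc (0:ℝ) < r2 - m2 := hviab
        _ = a2 θ := h2.symm
        _ ≤ max (a1 θ) (a2 θ) := le_max_right _ _
        _ ≤ W θ := this
  have hex : ∃ z, 0 < W z := by
    rcases hkey with h | h
    exacts [⟨-θ, h⟩, ⟨θ, h⟩]
  refine ⟨hkey, hex, ?_, ?_⟩
  · obtain ⟨z, hz⟩ := hex; exact ⟨z, le_of_lt hz⟩
  · -- compactness: closed and bounded
    have hWcont : Continuous W := by
      have hWfun : W = fun z => (1/2) * (((r1 - g1 * (z - (-θ))^2) - m1) + ((r2 - g2 * (z - θ)^2) - m2))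
          + (1/2) * Real.sqrt ((((r1 - g1 * (z - (-θ))^2) - m1) - ((r2 - g2 * (z - θ)^2) - m2))^2 + 4 * m1 * m2) := by
        funext z; rw [hW z, ha1 z, ha2 z]
      rw [hWfun]
      apply Continuous.add
      · fun_prop
      · exact (continuous_const.mul (Real.continuous_sqrt.comp (by fun_prop)))
    have hclosed : IsClosed {z : ℝ | 0 ≤ W z} := isClosed_le continuous_const hWcont
    set C : ℝ := max (r1 - m1) (r2 - m2) + (m1 + m2)/2 with hC
    have hCpos : 0 < C := by positivity
    set gmin : ℝ := min g1 g2 with hgmin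
    have hgminpos : 0 < gmin := lt_min hg1 hg2
    set M : ℝ := |θ| + Real.sqrt (C / gmin) with hM
    have hsub : {z : ℝ | 0 ≤ W z} ⊆ Set.Icc (-M) M := by
      intro z hz
      simp only [Set.mem_setOf_eq] at hz
      rw [hW z] at hz
      have hS : Real.sqrt ((a1 z - a2 z)^2 + 4 * m1 * m2) ≤ |a1 z - a2 z| + (m1 + m2) := by
        rw [show (a1 z - a2 z)^2 + 4 * m1 * m2
            = |a1 z - a2 z|^2 + 4*m1*m2 by rw [sq_abs]]
        have habs : 0 ≤ |a1 z - a2 z| := abs_nonneg _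
        have h2 : |a1 z - a2 z|^2 + 4*m1*m2 ≤ (|a1 z - a2 z| + (m1 + m2))^2 := by
          nlinarith [sq_nonneg (m1 - m2), mul_nonneg habs (by linarith : (0:ℝ) ≤ m1 + m2)]
        calc Real.sqrt (|a1 z - a2 z|^2 + 4*m1*m2)
            ≤ Real.sqrt ((|a1 z - a2 z| + (m1 + m2))^2) := Real.sqrt_le_sqrt h2
          _ = |a1 z - a2 z| + (m1 + m2) := Real.sqrt_sq (by positivity)
      -- so 0 ≤ max(a1,a2) + (m1+m2)/2
      have key : ∃ w : ℝ, gmin * w^2 ≤ C ∧ |z| ≤ |w| + |θ| := by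
        rcases abs_cases (a1 z - a2 z) with ⟨he, _⟩ | ⟨he, _⟩ <;> rw [he] at hS
        · -- a1 is the larger: 0 ≤ a1 z + (m1+m2)/2
          refine ⟨z + θ, ?_, ?_⟩
          · have h1 : 0 ≤ a1 z + (m1 + m2)/2 := by linarith
            rw [ha1 z] at h1
            have hC1 : r1 - m1 ≤ max (r1 - m1) (r2 - m2) := le_max_left _ _
            have hg : gmin ≤ g1 := min_le_left _ _
            have hsq : (0:ℝ) ≤ (z + θ)^2 := sq_nonneg _
            have : (z - (-θ))^2 = (z + θ)^2 := by ring
            rw [this] at h1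
            rw [hC]
            nlinarith [mul_nonneg (sub_nonneg.mpr hg) hsq]
          · calc |z| = |(z + θ) + (-θ)| := by ring_nf
              _ ≤ |z + θ| + |(-θ)| := abs_add_le _ _
              _ = |z + θ| + |θ| := by rw [abs_neg]
        · refine ⟨z - θ, ?_, ?_⟩
          · have h1 : 0 ≤ a2 z + (m1 + m2)/2 := by linarith
            rw [ha2 z] at h1
            have hC1 : r2 - m2 ≤ max (r1 - m1) (r2 - m2) := le_max_right _ _
            have hg : gmin ≤ g2 := min_le_right _ _
            have hsq : (0:ℝ) ≤ (z - θ)^2 := sq_nonneg _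
            rw [hC]
            nlinarith [mul_nonneg (sub_nonneg.mpr hg) hsq]
          · calc |z| = |(z - θ) + θ| := by ring_nf
              _ ≤ |z - θ| + |θ| := abs_add_le _ _
      obtain ⟨w, hw1, hw2⟩ := key
      have hwsq : w^2 ≤ C / gmin := by
        rw [le_div_iff₀ hgminpos]; linarith [hw1]
      have hwabs : |w| ≤ Real.sqrt (C / gmin) := by
        rw [← Real.sqrt_sq_eq_abs]; exact Real.sqrt_le_sqrt hwsq
      have : |z| ≤ M := by rw [hM]; linarith
      rcases abs_le.mp this with ⟨h1, h2⟩
      exact ⟨h1, h2⟩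
    exact (isCompact_Icc).of_isClosed_subset hclosed hsub
end

section
/- Let a1, a2 : ℝ → ℝ be given by ai(z) = ri - gi(z - θi)^2 - κi Ni - mi with g1, g2 > 0, and let W(z) = (1/2)(a1 + a2)(z) + (1/2)·sqrt((a1 - a2)^2(z) + 4 m1 m2) with m1 m2 > 0. Then the set {z : W(z) = 0} equals the set {z : a1(z) a2(z) = m1 m2 and a1(z) + a2(z) < 0}, and this set is finite with at most 4 elements. -/
open Polynomial in
theorem fitness_zero_set_finite
    (r1 r2 g1 g2 κ1 κ2 m1 m2 θ N1 N2 : ℝ)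
    (hg1 : 0 < g1) (hg2 : 0 < g2)
    (hm : 0 < m1 * m2)
    (a1 a2 : ℝ → ℝ)
    (ha1 : ∀ z, a1 z = r1 - g1 * (z - (-θ))^2 - κ1 * N1 - m1)
    (ha2 : ∀ z, a2 z = r2 - g2 * (z - θ)^2 - κ2 * N2 - m2)
    (W : ℝ → ℝ)
    (hW : ∀ z, W z = (1/2) * (a1 z + a2 z)
        + (1/2) * Real.sqrt ((a1 z - a2 z)^2 + 4 * m1 * m2)) :
    {z : ℝ | W z = 0} = {z : ℝ | a1 z * a2 z = m1 * m2 ∧ a1 z + a2 z < 0} ∧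
    {z : ℝ | W z = 0}.Finite ∧ {z : ℝ | W z = 0}.ncard ≤ 4 := by
  have key : ∀ z, W z = 0 ↔ (a1 z * a2 z = m1 * m2 ∧ a1 z + a2 z < 0) := by
    intro z
    have hd : 0 < (a1 z - a2 z)^2 + 4 * m1 * m2 := by
      nlinarith [sq_nonneg (a1 z - a2 z)]
    constructor
    · intro h
      have hWz := hW z
      rw [h] at hWz
      have hs : Real.sqrt ((a1 z - a2 z)^2 + 4 * m1 * m2) = -(a1 z + a2 z) := by
        linarith
      have hpos : 0 < Real.sqrt ((a1 z - a2 z)^2 + 4 * m1 * m2) :=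
        Real.sqrt_pos.mpr hd
      have hsum : a1 z + a2 z < 0 := by rw [hs] at hpos; linarith
      have hsq : (a1 z - a2 z)^2 + 4*m1*m2 = (a1 z + a2 z)^2 := by
        have h2 := Real.sq_sqrt hd.le
        rw [hs] at h2
        nlinarith [h2]
      exact ⟨by nlinarith [hsq], hsum⟩
    · rintro ⟨h1, h2⟩
      have he : (a1 z - a2 z)^2 + 4*m1*m2 = (a1 z + a2 z)^2 := by nlinarith
      rw [hW z]
      rw [show (a1 z - a2 z)^2 + 4 * m1 * m2 = (a1 z + a2 z)^2 by linarith,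
        Real.sqrt_sq_eq_abs, abs_of_neg h2]
      ring
  have hseteq : {z : ℝ | W z = 0} = {z : ℝ | a1 z * a2 z = m1 * m2 ∧ a1 z + a2 z < 0} := by
    ext z; exact key z
  set p : Polynomial ℝ :=
    (C (r1 - κ1*N1 - m1) - C g1 * (X + C θ)^2) *
      (C (r2 - κ2*N2 - m2) - C g2 * (X - C θ)^2) - C (m1*m2) with hp
  have heval : ∀ z, p.eval z = a1 z * a2 z - m1 * m2 := by
    intro z
    simp only [hp, ha1, ha2, eval_sub, eval_mul, eval_add, eval_pow, eval_C, eval_X]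
    ring
  have hdeg : p.natDegree = 4 := by
    rw [hp]
    compute_degree!
    ring_nf
    exact ⟨hg1.ne', hg2.ne'⟩
  have hp0 : p ≠ 0 := by
    intro h
    rw [h] at hdeg
    simp at hdeg
  have hsub : {z : ℝ | W z = 0} ⊆ (p.roots.toFinset : Set ℝ) := by
    intro z hz
    have h := (key z).1 hz
    simp only [Finset.coe_sort_coe, Multiset.mem_toFinset, Finset.mem_coe,
      mem_roots hp0, IsRoot, heval]
    linarith [h.1]
  have hfin : {z : ℝ | W z = 0}.Finite :=
    Set.Finite.subset (p.roots.toFinset.finite_toSet) hsub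
  refine ⟨hseteq, hfin, ?_⟩
  calc {z : ℝ | W z = 0}.ncard ≤ (p.roots.toFinset : Set ℝ).ncard :=
        Set.ncard_le_ncard hsub (p.roots.toFinset.finite_toSet)
    _ = p.roots.toFinset.card := Set.ncard_coe_finset _
    _ ≤ Multiset.card p.roots := Multiset.toFinset_card_le _
    _ ≤ p.natDegree := Polynomial.card_roots' p
    _ = 4 := hdeg
end
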